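/- Let n > 1 be a squarefree integer. For each integer a, let a' be an integer satisfying, for every prime p dividing n: a' ≡ 1 (mod p) if a ≡ 0 (mod p), and a' ≡ a (mod p) otherwise (such a' exists by the Chinese Remainder Theorem). Then: (i) gcd(a', n) = 1 for every integer a; and (ii) for every nonempty finite multiset W of integers, if the product of the corresponding integers a' over all a in W is congruent to 1 modulo n, then the product of the elements of W is idempotent modulo n. -/

import Mathlib

private lemma sqfree_dvd_of_primes (n : ℕ) (hsf : Squarefree n) (m : ℤ)
    (h : ∀ p : ℕ, p.Prime → p ∣ n → (p : ℤ) ∣ m) : (n : ℤ) ∣ m := by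
  have h0 : n ≠ 0 := hsf.ne_zero
  have hn : n ∣ m.natAbs := by
    rw [← Nat.prod_primeFactors_of_squarefree hsf]
    refine Finset.prod_primes_dvd m.natAbs (fun p hp => ?_) (fun p hp => ?_)
    · exact (Nat.prime_of_mem_primeFactors hp).prime
    · have := h p (Nat.prime_of_mem_primeFactors hp) (Nat.dvd_of_mem_primeFactors hp)
      have h2 := Int.natAbs_dvd_natAbs.mpr this
      simpa using h2
  exact (Int.natCast_dvd_natCast.mpr hn).trans (Int.natAbs_dvd.mpr dvd_rfl)

private lemma not_dvd_f (n : ℕ) (f : ℤ → ℤ)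
    (hf : ∀ a : ℤ, ∀ p : ℕ, p.Prime → p ∣ n →
      (((p : ℤ) ∣ a → f a ≡ 1 [ZMOD (p : ℤ)]) ∧ (¬ (p : ℤ) ∣ a → f a ≡ a [ZMOD (p : ℤ)])))
    (a : ℤ) (p : ℕ) (hp : p.Prime) (hpn : p ∣ n) : ¬ (p : ℤ) ∣ f a := by
  intro hdvd
  by_cases h : (p : ℤ) ∣ a
  · have h1 := (hf a p hp hpn).1 h
    have h2 : (p : ℤ) ∣ 1 - f a := Int.ModEq.dvd h1
    have hp1 : (p : ℤ) ∣ 1 := by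
      have := dvd_add h2 hdvd; simpa using this
    have : (p : ℤ) = 1 := Int.eq_one_of_dvd_one (by positivity) hp1
    exact hp.ne_one (by exact_mod_cast this)
  · have h2 := (hf a p hp hpn).2 h
    have h3 : (p : ℤ) ∣ a - f a := Int.ModEq.dvd h2
    exact h (by have := dvd_add h3 hdvd; simpa using this)

private lemma prod_modeq (p : ℤ) (f : ℤ → ℤ) (W : Multiset ℤ)
    (h : ∀ a ∈ W, f a ≡ a [ZMOD p]) : (W.map f).prod ≡ W.prod [ZMOD p] := by
  induction W using Multiset.induction with
  | empty => simp [Int.ModEq.refl]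
  | cons a s ih =>
    simp only [Multiset.map_cons, Multiset.prod_cons]
    exact (h a (Multiset.mem_cons_self a s)).mul
      (ih (fun b hb => h b (Multiset.mem_cons_of_mem hb)))

theorem stmt_8 (n : ℕ) (hn : 1 < n) (hsf : Squarefree n) (f : ℤ → ℤ)
    (hf : ∀ a : ℤ, ∀ p : ℕ, p.Prime → p ∣ n →
      (((p : ℤ) ∣ a → f a ≡ 1 [ZMOD (p : ℤ)]) ∧ (¬ (p : ℤ) ∣ a → f a ≡ a [ZMOD (p : ℤ)]))) :
    (∀ a : ℤ, Int.gcd (f a) (n : ℤ) = 1) ∧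
      ∀ W : Multiset ℤ, W ≠ 0 → (W.map f).prod ≡ 1 [ZMOD (n : ℤ)] →
        W.prod ^ 2 ≡ W.prod [ZMOD (n : ℤ)] := by
  constructor
  · intro a
    by_contra hne
    set g := Int.gcd (f a) (n : ℤ) with hg
    have hg0 : g ≠ 0 := by
      intro h
      have := Int.gcd_eq_zero_iff.mp h
      omega
    have hg1 : g ≠ 1 := hne
    obtain ⟨p, hp, hpg⟩ := Nat.exists_prime_and_dvd hg1
    have hpn : p ∣ n := by
      have : (g : ℤ) ∣ (n : ℤ) := Int.gcd_dvd_right (f a) (n : ℤ)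
      exact_mod_cast (Int.natCast_dvd_natCast.mpr hpg).trans this
    have hpf : (p : ℤ) ∣ f a := (Int.natCast_dvd_natCast.mpr hpg).trans (Int.gcd_dvd_left (f a) (n : ℤ))
    exact not_dvd_f n f hf a p hp (by exact_mod_cast hpn) hpf
  · intro W _ hprod
    have key : (n : ℤ) ∣ W.prod - W.prod ^ 2 := by
      apply sqfree_dvd_of_primes n hsf
      intro p hp hpn
      by_cases hex : ∃ a ∈ W, (p : ℤ) ∣ a
      · obtain ⟨a, ha, hpa⟩ := hex
        have h1 : (p : ℤ) ∣ W.prod := hpa.trans (Multiset.dvd_prod ha)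
        exact dvd_sub h1 (h1.trans (dvd_pow_self _ two_ne_zero))
      · push_neg at hex
        have h1 : (W.map f).prod ≡ W.prod [ZMOD (p : ℤ)] :=
          prod_modeq (p : ℤ) f W (fun a ha => (hf a p hp hpn).2 (hex a ha))
        have h2 : (W.map f).prod ≡ 1 [ZMOD (p : ℤ)] :=
          hprod.of_dvd (Int.natCast_dvd_natCast.mpr hpn)
        have hW : W.prod ≡ 1 [ZMOD (p : ℤ)] := h1.symm.trans h2
        have hsq : W.prod ^ 2 ≡ 1 [ZMOD (p : ℤ)] := by simpa using hW.pow 2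
        exact Int.ModEq.dvd (hsq.trans hW.symm)
    exact Int.modEq_iff_dvd.mpr key
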